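/- Suppose 1 ≤ a ≤ f − g. Then the ag entries of the product matrix XY form a regular sequence in the polynomial ring R; in particular the quotient R/I is a complete intersection ring, hence Cohen–Macaulay. -/

import Mathlib

open MvPolynomial

/-- The `(i,j)` entry of the product `X·Y` of the generic `a × f` matrix `X` and the
generic `f × g` matrix `Y`, as an element of the polynomial ring
`k[x_{il}, y_{lj}]` in `af + fg` variables. -/
noncomputable def genericProdEntry (k : Type*) [CommSemiring k] (a f g : ℕ)
    (i : Fin a) (j : Fin g) : MvPolynomial ((Fin a × Fin f) ⊕ (Fin f × Fin g)) k :=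
  ∑ l : Fin f, X (Sum.inl (i, l)) * X (Sum.inr (l, j))


open Finsupp

namespace RegSeqAux

variable {σ : Type*} {k : Type*} [Field k] (w : σ → ℕ)

/-- Weighted total degree, `ℕ`-valued. -/
noncomputable abbrev deg (p : MvPolynomial σ k) : ℕ := weightedTotalDegree w p

/-- Top (initial) weighted-homogeneous form. -/
noncomputable abbrev top (p : MvPolynomial σ k) : MvPolynomial σ k :=
  weightedHomogeneousComponent w (deg w p) p

variable {w}

lemma weight_le_deg {p : MvPolynomial σ k} {d : σ →₀ ℕ} (hd : d ∈ p.support) :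
    weight w d ≤ deg w p := le_weightedTotalDegree w hd

lemma top_ne_zero {p : MvPolynomial σ k} (hp : p ≠ 0) : top w p ≠ 0 := by
  classical
  have hne : p.support.Nonempty := by
    obtain ⟨d, hd⟩ := MvPolynomial.ne_zero_iff.mp hp
    exact ⟨d, MvPolynomial.mem_support_iff.mpr hd⟩
  obtain ⟨d, hd, hsup⟩ := Finset.exists_mem_eq_sup p.support hne (fun s => weight w s)
  have hdd : weight w d = deg w p := hsup.symm
  have hc : coeff d (top w p) = coeff d p := by
    rw [coeff_weightedHomogeneousComponent, if_pos hdd]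
  intro h
  rw [h, coeff_zero] at hc
  exact (MvPolynomial.mem_support_iff.mp hd) hc.symm

lemma top_isWH (p : MvPolynomial σ k) : IsWeightedHomogeneous w (top w p) (deg w p) :=
  weightedHomogeneousComponent_isWeightedHomogeneous _ _

lemma coeff_top (p : MvPolynomial σ k) (d : σ →₀ ℕ) [DecidableEq (σ →₀ ℕ)] :
    coeff d (top w p) = if weight w d = deg w p then coeff d p else 0 := by
  classical
  rw [coeff_weightedHomogeneousComponent]

lemma support_sub_top {p : MvPolynomial σ k} {d : σ →₀ ℕ}
    (hd : d ∈ (p - top w p).support) : weight w d < deg w p := by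
  classical
  have hco : coeff d (p - top w p) ≠ 0 := MvPolynomial.mem_support_iff.mp hd
  rw [coeff_sub, coeff_weightedHomogeneousComponent] at hco
  by_cases h : weight w d = deg w p
  · rw [if_pos h, sub_self] at hco; exact absurd rfl hco
  · rw [if_neg h, sub_zero] at hco
    exact lt_of_le_of_ne (weight_le_deg (MvPolynomial.mem_support_iff.mpr hco)) h

/-- Weight bound for supports of products. -/
lemma support_mul_weight_lt {p q : MvPolynomial σ k} {a b : ℕ}
    (hp : ∀ d ∈ p.support, weight w d ≤ a) (hq : ∀ d ∈ q.support, weight w d < b)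
    {d : σ →₀ ℕ} (hd : d ∈ (p * q).support) : weight w d < a + b := by
  classical
  obtain ⟨u, hu, v, hv, rfl⟩ := Finset.mem_add.mp (MvPolynomial.support_mul p q hd)
  rw [map_add]
  exact add_lt_add_of_le_of_lt (hp u hu) (hq v hv)

lemma support_mul_weight_le {p q : MvPolynomial σ k} {a b : ℕ}
    (hp : ∀ d ∈ p.support, weight w d ≤ a) (hq : ∀ d ∈ q.support, weight w d ≤ b)
    {d : σ →₀ ℕ} (hd : d ∈ (p * q).support) : weight w d ≤ a + b := by
  classical
  obtain ⟨u, hu, v, hv, rfl⟩ := Finset.mem_add.mp (MvPolynomial.support_mul p q hd)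
  rw [map_add]
  exact add_le_add (hp u hu) (hq v hv)

lemma deg_le_of_support {p : MvPolynomial σ k} {N : ℕ}
    (h : ∀ d ∈ p.support, weight w d ≤ N) : deg w p ≤ N :=
  Finset.sup_le h

lemma hc_eq_zero_of_deg_lt {p : MvPolynomial σ k} {N : ℕ} (h : deg w p < N) :
    weightedHomogeneousComponent w N p = 0 :=
  weightedHomogeneousComponent_eq_zero _ _ h

lemma deg_mul_top {p q : MvPolynomial σ k} (hp : p ≠ 0) (hq : q ≠ 0) :
    deg w (p * q) = deg w p + deg w q ∧ top w (p * q) = top w p * top w q := by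
  classical
  set N := deg w p + deg w q with hN
  set P := top w p with hP
  set Q := top w q with hQ
  have hPQhom : IsWeightedHomogeneous w (P * Q) N := (top_isWH p).mul (top_isWH q)
  have hPQ0 : P * Q ≠ 0 := mul_ne_zero (top_ne_zero hp) (top_ne_zero hq)
  have hexp : p * q = P * Q + (P * (q - Q) + (p - P) * q) := by ring
  have hlow : ∀ d ∈ (P * (q - Q) + (p - P) * q).support, weight w d ≠ N := by
    intro d hd
    have := MvPolynomial.support_add hd
    rcases Finset.mem_union.mp this with h1 | h1
    · exact ne_of_lt (support_mul_weight_lt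
        (fun d hd => le_of_eq (top_isWH p (MvPolynomial.mem_support_iff.mp hd))) (fun d hd => support_sub_top hd) h1)
    · have h1' : d ∈ (q * (p - P)).support := by rwa [mul_comm] at h1
      have hlt : weight w d < deg w q + deg w p :=
        support_mul_weight_lt (fun d hd => weight_le_deg hd)
          (fun d hd => support_sub_top hd) h1'
      rw [hN]; omega
  have hcomp : weightedHomogeneousComponent w N (p * q) = P * Q := by
    rw [hexp, map_add, hPQhom.weightedHomogeneousComponent_same,
      weightedHomogeneousComponent_eq_zero' _ _ hlow, add_zero]
  have hle : deg w (p * q) ≤ N := by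
    apply deg_le_of_support
    intro d hd
    exact support_mul_weight_le (fun d hd => weight_le_deg hd)
      (fun d hd => weight_le_deg hd) hd
  have hdeg : deg w (p * q) = N := by
    rcases lt_or_eq_of_le hle with h | h
    · exact absurd (hcomp ▸ hc_eq_zero_of_deg_lt h) hPQ0
    · exact h
  exact ⟨hdeg, by rw [top, hdeg, hcomp]⟩

lemma deg_mul {p q : MvPolynomial σ k} (hp : p ≠ 0) (hq : q ≠ 0) :
    deg w (p * q) = deg w p + deg w q := (deg_mul_top hp hq).1

lemma top_mul {p q : MvPolynomial σ k} (hp : p ≠ 0) (hq : q ≠ 0) :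
    top w (p * q) = top w p * top w q := (deg_mul_top hp hq).2


variable {w : σ → ℕ}

/-- Extracting a weighted homogeneous component of a multiple of a monomial. -/
lemma hc_mul_monomial (c : MvPolynomial σ k) (e : σ →₀ ℕ) {n : ℕ} (hn : weight w e ≤ n) :
    weightedHomogeneousComponent w n (c * monomial e 1) =
      weightedHomogeneousComponent w (n - weight w e) c * monomial e 1 := by
  classical
  ext d
  rw [coeff_weightedHomogeneousComponent, coeff_mul_monomial', coeff_mul_monomial']
  by_cases he : e ≤ d
  · rw [if_pos he, if_pos he, coeff_weightedHomogeneousComponent]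
    have hsum : weight w (d - e) + weight w e = weight w d := by
      rw [← map_add (weight w), tsub_add_cancel_of_le he]
    by_cases hw : weight w d = n
    · rw [if_pos hw, if_pos (by omega)]
    · rw [if_neg hw, if_neg (by omega)]; ring
  · rw [if_neg he, if_neg he, ite_self]

/-- The top form of a sum of distinct monomials with a unique weight-maximal term. -/
lemma top_sum_monomials {ι : Type*} [Fintype ι] [Nonempty ι] (ε : ι → (σ →₀ ℕ))
    (hinj : Function.Injective ε) (l0 : ι)
    (hmax : ∀ l, l ≠ l0 → weight w (ε l) < weight w (ε l0)) :
    top w (∑ l, monomial (ε l) (1 : k)) = monomial (ε l0) 1 ∧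
      deg w (∑ l, monomial (ε l) (1 : k)) = weight w (ε l0) := by
  classical
  set p := ∑ l, monomial (ε l) (1 : k) with hp
  have hcoeff : ∀ d, coeff d p = if ∃ l, ε l = d then 1 else 0 := by
    intro d
    rw [hp, coeff_sum]
    by_cases h : ∃ l, ε l = d
    · obtain ⟨l, rfl⟩ := h
      rw [if_pos ⟨l, rfl⟩, Finset.sum_eq_single l]
      · simp [coeff_monomial]
      · intro b _ hb
        rw [coeff_monomial, if_neg (fun hh => hb (hinj hh))]
      · simp
    · rw [if_neg h, Finset.sum_eq_zero]
      intro b _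
      rw [coeff_monomial, if_neg (fun hh => h ⟨b, hh⟩)]
  have hsupp : ∀ d ∈ p.support, ∃ l, ε l = d := by
    intro d hd
    have := MvPolynomial.mem_support_iff.mp hd
    rw [hcoeff] at this
    by_contra h
    rw [if_neg h] at this
    exact this rfl
  have hl0 : ε l0 ∈ p.support := by
    rw [MvPolynomial.mem_support_iff, hcoeff, if_pos ⟨l0, rfl⟩]
    exact one_ne_zero
  have hdeg : deg w p = weight w (ε l0) := by
    apply le_antisymm
    · apply Finset.sup_le
      intro d hd
      obtain ⟨l, rfl⟩ := hsupp d hd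
      rcases eq_or_ne l l0 with rfl | hne
      · exact le_refl _
      · exact (hmax l hne).le
    · exact le_weightedTotalDegree w hl0
  refine ⟨?_, hdeg⟩
  ext d
  rw [coeff_weightedHomogeneousComponent, coeff_monomial]
  by_cases hw : weight w d = deg w p
  · rw [if_pos hw, hcoeff]
    by_cases hd : d = ε l0
    · rw [if_pos ⟨l0, hd.symm⟩, if_pos hd.symm]
    · rw [if_neg (fun h : ε l0 = d => hd h.symm), if_neg]
      rintro ⟨l, rfl⟩
      rcases eq_or_ne l l0 with rfl | hne
      · exact hd rfl
      · exact absurd (hdeg ▸ hw) (ne_of_lt (hmax l hne))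
  · rw [if_neg hw, if_neg]
    intro h
    exact hw (by rw [← h, hdeg])

/-- Colon with a variable-disjoint monomial: monomial ideals. -/
lemma monomial_colon {E : Set (σ →₀ ℕ)} {e : σ →₀ ℕ}
    (hd : ∀ d ∈ E, Disjoint d.support e.support)
    {u : MvPolynomial σ k}
    (h : u * monomial e 1 ∈ Ideal.span ((fun d => monomial d (1 : k)) '' E)) :
    u ∈ Ideal.span ((fun d => monomial d (1 : k)) '' E) := by
  classical
  rw [mem_ideal_span_monomial_image] at h ⊢
  intro xi hxi
  have hmem : xi + e ∈ (u * monomial e 1).support := by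
    rw [MvPolynomial.mem_support_iff, coeff_mul_monomial', if_pos le_add_self]
    · rw [add_tsub_cancel_right, mul_one]
      exact MvPolynomial.mem_support_iff.mp hxi
  obtain ⟨si, hsi, hle⟩ := h _ hmem
  refine ⟨si, hsi, ?_⟩
  rw [Finsupp.le_def] at hle ⊢
  intro v
  rcases eq_or_ne (si v) 0 with h0 | h0
  · omega
  · have hv : v ∈ si.support := Finsupp.mem_support_iff.mpr h0
    have hev : e v = 0 := by
      by_contra he0
      exact (Finset.disjoint_left.mp (hd si hsi)) hv (Finsupp.mem_support_iff.mpr he0) 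
    have := hle v
    simp only [Finsupp.coe_add, Pi.add_apply, hev, add_zero] at this
    exact this


section Main

variable {n : ℕ} (w : σ → ℕ) (F : Fin n → MvPolynomial σ k) (e : Fin n → (σ →₀ ℕ))

/-- Ideal generated by the first `t` elements of the sequence. -/
noncomputable def Idl (t : ℕ) : Ideal (MvPolynomial σ k) :=
  Ideal.span (Set.range (fun s : {s : Fin n // s.val < t} => F s.1))

/-- Ideal generated by the first `t` initial monomials. -/
noncomputable def Mon (t : ℕ) : Ideal (MvPolynomial σ k) :=
  Ideal.span (Set.range (fun s : {s : Fin n // s.val < t} => monomial (e s.1) (1 : k)))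

lemma Mon_eq_image (t : ℕ) :
    Mon (k := k) e t =
      Ideal.span ((fun d => monomial d (1 : k)) ''
        (Set.range (fun s : {s : Fin n // s.val < t} => e s.1))) := by
  rw [Mon, ← Set.range_comp]
  rfl

lemma Idl_mono {t t' : ℕ} (h : t ≤ t') : Idl F t ≤ Idl F t' := by
  apply Ideal.span_mono
  rintro z ⟨s, rfl⟩
  exact ⟨⟨s.1, lt_of_lt_of_le s.2 h⟩, rfl⟩

lemma Mon_mono {t t' : ℕ} (h : t ≤ t') : Mon (k := k) e t ≤ Mon e t' := by
  apply Ideal.span_mono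
  rintro z ⟨s, rfl⟩
  exact ⟨⟨s.1, lt_of_lt_of_le s.2 h⟩, rfl⟩

lemma Idl_zero : Idl F 0 = ⊥ := by
  have : IsEmpty {s : Fin n // s.val < 0} := ⟨fun s => Nat.not_lt_zero _ s.2⟩
  rw [Idl, Set.range_eq_empty, Ideal.span_empty]

lemma F_mem_Idl {s : Fin n} {t : ℕ} (hs : s.val < t) : F s ∈ Idl F t :=
  Ideal.subset_span ⟨⟨s, hs⟩, rfl⟩

lemma monomial_mem_Mon {s : Fin n} {t : ℕ} (hs : s.val < t) :
    monomial (e s) (1 : k) ∈ Mon e t :=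
  Ideal.subset_span ⟨⟨s, hs⟩, rfl⟩

lemma Idl_succ_mem {t : ℕ} (ht : t < n) {v : MvPolynomial σ k} (hv : v ∈ Idl F (t + 1)) :
    ∃ u h, u ∈ Idl F t ∧ v = u + h * F ⟨t, ht⟩ := by
  have hrange : Set.range (fun s : {s : Fin n // s.val < t + 1} => F s.1) =
      Set.range (fun s : {s : Fin n // s.val < t} => F s.1) ∪ {F ⟨t, ht⟩} := by
    ext z
    constructor
    · rintro ⟨⟨s, hs⟩, rfl⟩
      rcases Nat.lt_succ_iff_lt_or_eq.mp hs with h | h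
      · exact Or.inl ⟨⟨s, h⟩, rfl⟩
      · refine Or.inr ?_
        have : s = ⟨t, ht⟩ := Fin.ext h
        exact Set.mem_singleton_iff.mpr (congrArg F this)
    · rintro (⟨⟨s, hs⟩, rfl⟩ | hz)
      · exact ⟨⟨s, Nat.lt_succ_of_lt hs⟩, rfl⟩
      · rw [Set.mem_singleton_iff] at hz
        exact ⟨⟨⟨t, ht⟩, Nat.lt_succ_self t⟩, hz.symm⟩
  rw [Idl, hrange, Ideal.span_union] at hv
  obtain ⟨u, hu, z, hz, rfl⟩ := Submodule.mem_sup.mp hv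
  obtain ⟨h, hh⟩ := Ideal.mem_span_singleton'.mp hz
  exact ⟨u, h, hu, by rw [hh]⟩

variable {F e}

/-- Nonvanishing of the sequence elements. -/
lemma F_ne_zero (htop : ∀ s, top w (F s) = monomial (e s) 1) (s : Fin n) : F s ≠ 0 := by
  intro h0
  have h1 := htop s
  rw [h0] at h1
  rw [show top w (0 : MvPolynomial σ k) = 0 from map_zero _] at h1
  exact one_ne_zero (monomial_eq_zero.mp h1.symm)

lemma deg_F (htop : ∀ s, top w (F s) = monomial (e s) 1) (s : Fin n) :
    deg w (F s) = weight w (e s) := by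
  refine IsWeightedHomogeneous.inj_right (φ := top w (F s)) ?_ (top_isWH _) ?_
  · rw [htop s]
    exact fun h => one_ne_zero (monomial_eq_zero.mp h)
  · rw [htop s]
    exact isWeightedHomogeneous_monomial _ _ _ rfl

/-- Colon property of the monomial ideal. -/
lemma Mon_colon (hdisj : ∀ s t : Fin n, s ≠ t → Disjoint (e s).support (e t).support)
    {t : ℕ} {s₀ : Fin n} (hs₀ : t ≤ s₀.val) {u : MvPolynomial σ k}
    (h : u * monomial (e s₀) 1 ∈ Mon e t) : u ∈ Mon e t := by
  rw [Mon_eq_image] at h ⊢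
  refine monomial_colon ?_ h
  rintro d ⟨s, rfl⟩
  exact hdisj s.1 s₀ (fun hq => absurd (hq ▸ s.2) (by omega))

/-- The key reduction step: if the top form of `h` lies in the monomial ideal,
we can subtract an element of `Idl F t` from `h` to strictly decrease its degree. -/
lemma reduce (htop : ∀ s, top w (F s) = monomial (e s) 1)
    {t : ℕ} {h : MvPolynomial σ k} (hmem : top w h ∈ Mon e t) :
    ∃ q ∈ Idl F t, (h - q = 0 ∨ deg w (h - q) < deg w h) := by
  classical
  set D := deg w h with hD
  -- get a representation of the top form
  rw [Mon] at hmem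
  obtain ⟨c, hc⟩ := Ideal.mem_span_range_iff_exists_fun.mp hmem
  set W : {s : Fin n // s.val < t} → ℕ := fun s => weight w (e s.1) with hW
  set c' : {s : Fin n // s.val < t} → MvPolynomial σ k :=
    fun s => if W s ≤ D then weightedHomogeneousComponent w (D - W s) (c s) else 0 with hc'
  -- `c'` is weighted homogeneous
  have hc'WH : ∀ s, IsWeightedHomogeneous w (c' s) (D - W s) := by
    intro s
    by_cases hWs : W s ≤ D
    · simp only [hc', if_pos hWs]
      exact weightedHomogeneousComponent_isWeightedHomogeneous _ _
    · simp only [hc', if_neg hWs]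
      exact isWeightedHomogeneous_zero _ _ _
  -- claim 1 : the homogeneous representation of the top form
  have claim1 : ∑ s, c' s * monomial (e s.1) (1 : k) = top w h := by
    have := congrArg (weightedHomogeneousComponent w D) hc
    rw [map_sum, (top_isWH h).weightedHomogeneousComponent_same] at this
    rw [← this]
    apply Finset.sum_congr rfl
    intro s _
    by_cases hWs : W s ≤ D
    · rw [hc_mul_monomial _ _ hWs]
      simp only [hc', if_pos hWs]
      rfl
    · have hz : weightedHomogeneousComponent w D (c s * monomial (e s.1) 1) = 0 := by
        apply weightedHomogeneousComponent_eq_zero'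
        intro d hd
        rcases Finset.mem_add.mp (MvPolynomial.support_mul _ _ hd) with ⟨u, hu, v, hv, rfl⟩
        have hvs : v = e s.1 := by
          have := MvPolynomial.support_monomial_subset hv
          simpa using this
        subst hvs
        have : weight w (u + e s.1) = weight w u + W s := by rw [map_add]
        omega
      rw [hz]
      simp only [hc', if_neg hWs, zero_mul]
  -- the element to subtract
  refine ⟨∑ s, c' s * F s.1, ?_, ?_⟩
  · exact Ideal.sum_mem _ (fun s _ => Ideal.mul_mem_left _ _ (F_mem_Idl F s.2))
  set q := ∑ s, c' s * F s.1 with hq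
  -- weight bound on the support of q
  have hqsupp : ∀ d ∈ q.support, weight w d ≤ D := by
    intro d hd
    rcases Finset.mem_biUnion.mp (MvPolynomial.support_sum hd) with ⟨s, _, hds⟩
    by_cases hWs : W s ≤ D
    · refine support_mul_weight_le (a := D - W s) (b := W s)
        (fun d hd => le_of_eq (hc'WH s (MvPolynomial.mem_support_iff.mp hd))) ?_ hds |>.trans ?_
      · intro d hd
        show weight w d ≤ weight w (e s.1)
        rw [← deg_F w htop s.1]
        exact weight_le_deg hd
      · omega
    · simp only [hc', if_neg hWs, zero_mul, MvPolynomial.support_zero] at hds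
      exact absurd hds (Finset.notMem_empty d)
  -- the top component of q is the top form of h
  have hqtop : weightedHomogeneousComponent w D q = top w h := by
    rw [hq, map_sum, ← claim1]
    apply Finset.sum_congr rfl
    intro s _
    by_cases hWs : W s ≤ D
    · have hsplit : c' s * F s.1 =
          c' s * monomial (e s.1) 1 + c' s * (F s.1 - top w (F s.1)) := by
        rw [← htop s]; ring
      rw [hsplit, map_add]
      have h1 : weightedHomogeneousComponent w D (c' s * monomial (e s.1) 1) =
          c' s * monomial (e s.1) 1 := by
        have : IsWeightedHomogeneous w (c' s * monomial (e s.1) 1) ((D - W s) + W s) :=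
          (hc'WH s).mul (isWeightedHomogeneous_monomial _ _ _ rfl)
        have heq : (D - W s) + W s = D := by omega
        rw [heq] at this
        exact this.weightedHomogeneousComponent_same
      have h2 : weightedHomogeneousComponent w D (c' s * (F s.1 - top w (F s.1))) = 0 := by
        apply weightedHomogeneousComponent_eq_zero'
        intro d hd
        have := support_mul_weight_lt (a := D - W s) (b := W s)
          (fun d hd => le_of_eq (hc'WH s (MvPolynomial.mem_support_iff.mp hd)))
          (fun d hd => by
            have := support_sub_top hd
            rwa [deg_F w htop s.1] at this) hd
        omega
      rw [h1, h2, add_zero]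
    · simp only [hc', if_neg hWs, zero_mul, map_zero]
  -- conclude
  have hsub : ∀ d ∈ (h - q).support, weight w d < D := by
    intro d hd
    have hcoeff : coeff d (h - q) ≠ 0 := MvPolynomial.mem_support_iff.mp hd
    rcases lt_trichotomy (weight w d) D with hlt | heq | hgt
    · exact hlt
    · exfalso
      apply hcoeff
      rw [coeff_sub]
      have h1 : coeff d h = coeff d (top w h) := by
        rw [coeff_weightedHomogeneousComponent, if_pos heq]
      have h2 : coeff d q = coeff d (top w h) := by
        rw [← hqtop, coeff_weightedHomogeneousComponent, if_pos heq]
      rw [h1, h2, sub_self]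
    · exfalso
      apply hcoeff
      rw [coeff_sub]
      have h1 : coeff d h = 0 := by
        by_contra hne
        have hle := weight_le_deg (w := w) (MvPolynomial.mem_support_iff.mpr hne)
        omega
      have h2 : coeff d q = 0 := by
        by_contra hne
        exact absurd (hqsupp d (MvPolynomial.mem_support_iff.mpr hne)) (by omega)
      rw [h1, h2, sub_self]
  rcases eq_or_ne (h - q) 0 with h0 | h0
  · exact Or.inl h0
  · refine Or.inr ?_
    have hne : (h - q).support.Nonempty := by
      obtain ⟨d, hd⟩ := MvPolynomial.ne_zero_iff.mp h0
      exact ⟨d, MvPolynomial.mem_support_iff.mpr hd⟩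
    obtain ⟨d, hd⟩ := hne
    have hDpos : 0 < D := lt_of_le_of_lt (Nat.zero_le _) (hsub d hd)
    exact Finset.sup_lt_iff (by simpa using hDpos) |>.mpr hsub

/-- Claim A: the top form of any element of `Idl F t` lies in the monomial ideal `Mon e t`. -/
lemma claimA (htop : ∀ s, top w (F s) = monomial (e s) 1)
    (hdisj : ∀ s t : Fin n, s ≠ t → Disjoint (e s).support (e t).support) :
    ∀ t : ℕ, t ≤ n → ∀ v ∈ Idl F t, v ≠ 0 → top w v ∈ Mon e t := by
  intro t
  induction t with
  | zero =>
    intro _ v hv hv0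
    rw [Idl_zero] at hv
    exact absurd ((Ideal.mem_bot).mp hv) hv0
  | succ t ih =>
    intro htn v hv hv0
    classical
    have htn' : t < n := htn
    have hA := ih (le_of_lt htn')
    set ft : MvPolynomial σ k := F ⟨t, htn'⟩ with hft
    have hmono0 : (monomial (e ⟨t, htn'⟩) (1 : k)) ≠ 0 :=
      fun hh => one_ne_zero (monomial_eq_zero.mp hh)
    have key : ∀ N : ℕ, ∀ h u : MvPolynomial σ k, (h = 0 ∨ deg w h < N) → u ∈ Idl F t →
        u + h * ft ≠ 0 → top w (u + h * ft) ∈ Mon e (t + 1) := by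
      intro N
      induction N with
      | zero =>
        intro h u hmu hu hne
        rcases hmu with h0 | h0
        · subst h0
          rw [zero_mul, add_zero] at hne ⊢
          exact Mon_mono e (Nat.le_succ t) (hA _ hu hne)
        · exact absurd h0 (Nat.not_lt_zero _)
      | succ N ihN =>
        intro h u hmu hu hne
        rcases eq_or_ne h 0 with h0 | h0
        · subst h0
          rw [zero_mul, add_zero] at hne ⊢
          exact Mon_mono e (Nat.le_succ t) (hA _ hu hne)
        have hdegh : deg w h ≤ N := by
          rcases hmu with h' | h'
          · exact absurd h' h0
          · omega
        have hft0 : ft ≠ 0 := F_ne_zero w htop _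
        have hhf0 : h * ft ≠ 0 := mul_ne_zero h0 hft0
        have hdeghf : deg w (h * ft) = deg w h + deg w ft := deg_mul h0 hft0
        have htophf : top w (h * ft) = top w h * monomial (e ⟨t, htn'⟩) 1 := by
          rw [top_mul h0 hft0, hft, htop]
        have hprod0 : top w h * monomial (e ⟨t, htn'⟩) (1 : k) ≠ 0 :=
          mul_ne_zero (top_ne_zero h0) hmono0
        set Nm := max (deg w u) (deg w (h * ft)) with hNm
        have hvsupp : ∀ d ∈ (u + h * ft).support, weight w d ≤ Nm := by
          intro d hd
          rcases Finset.mem_union.mp (Finsupp.support_add hd) with h1 | h1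
          · exact le_trans (weight_le_deg h1) (le_max_left _ _)
          · exact le_trans (weight_le_deg h1) (le_max_right _ _)
        rcases eq_or_ne (weightedHomogeneousComponent w Nm (u + h * ft)) 0 with hcz | hcz
        · -- cancellation of top forms
          have hadd : weightedHomogeneousComponent w Nm u
              + weightedHomogeneousComponent w Nm (h * ft) = 0 := by
            rw [← map_add]; exact hcz
          have hWeq : deg w (h * ft) = Nm := by
            by_contra hWne
            have hlt : deg w (h * ft) < Nm := lt_of_le_of_ne (le_max_right _ _) hWne
            rw [hc_eq_zero_of_deg_lt hlt, add_zero] at hadd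
            rcases eq_or_ne u 0 with rfl | hu0
            · have : deg w (0 : MvPolynomial σ k) = 0 := weightedTotalDegree_zero w
              omega
            · have hdu : deg w u = Nm := by omega
              have : top w u = 0 := by
                show weightedHomogeneousComponent w (deg w u) u = 0
                rw [hdu]; exact hadd
              exact top_ne_zero hu0 this
          have h2 : weightedHomogeneousComponent w Nm (h * ft)
              = top w h * monomial (e ⟨t, htn'⟩) 1 := by
            rw [← hWeq]; exact htophf
          rw [h2] at hadd
          have hcu : weightedHomogeneousComponent w Nm u
              = -(top w h * monomial (e ⟨t, htn'⟩) 1) :=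
            eq_neg_of_add_eq_zero_left hadd
          have hu0 : u ≠ 0 := by
            rintro rfl
            rw [map_zero] at hcu
            exact hprod0 (neg_eq_zero.mp hcu.symm)
          have hdegu : deg w u = Nm := by
            by_contra hdu
            have hlt : deg w u < Nm := lt_of_le_of_ne (le_max_left _ _) hdu
            rw [hc_eq_zero_of_deg_lt hlt] at hcu
            exact hprod0 (neg_eq_zero.mp hcu.symm)
          have htopu : top w u = -(top w h * monomial (e ⟨t, htn'⟩) 1) := by
            show weightedHomogeneousComponent w (deg w u) u = _
            rw [hdegu]; exact hcu
          have hmm := hA u hu hu0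
          rw [htopu] at hmm
          have hmem2 : top w h * monomial (e ⟨t, htn'⟩) 1 ∈ Mon e t := neg_mem_iff.mp hmm
          have htoph2 : top w h ∈ Mon e t := Mon_colon hdisj (le_refl t) hmem2
          obtain ⟨q, hqI, hqd⟩ := reduce w htop htoph2
          have hveq : u + h * ft = (u + q * ft) + (h - q) * ft := by ring
          rw [hveq]
          refine ihN (h - q) (u + q * ft) ?_ ?_ ?_
          · rcases hqd with h' | h'
            · exact Or.inl h'
            · right; omega
          · exact Ideal.add_mem _ hu (Ideal.mul_mem_right _ _ hqI)
          · rw [← hveq]; exact hne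
        · -- the top form survives
          have hdegv : deg w (u + h * ft) = Nm := by
            refine le_antisymm (deg_le_of_support hvsupp) ?_
            by_contra hlt
            push_neg at hlt
            exact hcz (hc_eq_zero_of_deg_lt hlt)
          have htopv : top w (u + h * ft) = weightedHomogeneousComponent w Nm u
              + weightedHomogeneousComponent w Nm (h * ft) := by
            show weightedHomogeneousComponent w (deg w (u + h * ft)) (u + h * ft) = _
            rw [hdegv, map_add]
          rw [htopv]
          refine Ideal.add_mem _ ?_ ?_
          · rcases eq_or_ne u 0 with rfl | hu0
            · rw [map_zero]; exact zero_mem _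
            rcases lt_or_eq_of_le (le_max_left (deg w u) (deg w (h * ft))) with hlt | heq
            · rw [hc_eq_zero_of_deg_lt hlt]; exact zero_mem _
            · have heq' : deg w u = Nm := by rw [hNm]; exact heq
              have hh : weightedHomogeneousComponent w Nm u = top w u := by
                show _ = weightedHomogeneousComponent w (deg w u) u
                rw [heq']
              rw [hh]
              exact Mon_mono e (Nat.le_succ t) (hA u hu hu0)
          · rcases lt_or_eq_of_le (le_max_right (deg w u) (deg w (h * ft))) with hlt | heq
            · rw [hc_eq_zero_of_deg_lt hlt]; exact zero_mem _
            · have heq' : deg w (h * ft) = Nm := by rw [hNm]; exact heq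
              have hh : weightedHomogeneousComponent w Nm (h * ft)
                  = top w h * monomial (e ⟨t, htn'⟩) 1 := by
                rw [← heq']; exact htophf
              rw [hh]
              exact Ideal.mul_mem_left _ _ (monomial_mem_Mon e (Nat.lt_succ_self t))
    obtain ⟨u, h, hu, hveq⟩ := Idl_succ_mem F htn' hv
    rw [hveq] at hv0 ⊢
    exact key (deg w h + 1) h u (Or.inr (Nat.lt_succ_self _)) hu hv0

/-- Claim B: each `F t` is a nonzerodivisor modulo the previous ones. -/
lemma claimB (htop : ∀ s, top w (F s) = monomial (e s) 1)
    (hdisj : ∀ s t : Fin n, s ≠ t → Disjoint (e s).support (e t).support)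
    {t : ℕ} (htn : t < n) :
    ∀ g : MvPolynomial σ k, g * F ⟨t, htn⟩ ∈ Idl F t → g ∈ Idl F t := by
  have hA := claimA w htop hdisj t (le_of_lt htn)
  suffices key : ∀ N : ℕ, ∀ g : MvPolynomial σ k, (g = 0 ∨ deg w g < N) →
      g * F ⟨t, htn⟩ ∈ Idl F t → g ∈ Idl F t by
    intro g hg
    exact key (deg w g + 1) g (Or.inr (Nat.lt_succ_self _)) hg
  intro N
  induction N with
  | zero =>
    intro g hmu _
    rcases hmu with rfl | h0
    · exact zero_mem _
    · exact absurd h0 (Nat.not_lt_zero _)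
  | succ N ihN =>
    intro g hmu hg
    rcases eq_or_ne g 0 with rfl | h0
    · exact zero_mem _
    have hdegg : deg w g ≤ N := by
      rcases hmu with h' | h'
      · exact absurd h' h0
      · omega
    have hft0 : F ⟨t, htn⟩ ≠ 0 := F_ne_zero w htop _
    have hne : g * F ⟨t, htn⟩ ≠ 0 := mul_ne_zero h0 hft0
    have htopgf : top w (g * F ⟨t, htn⟩) = top w g * monomial (e ⟨t, htn⟩) 1 := by
      rw [top_mul h0 hft0, htop]
    have hmem : top w g * monomial (e ⟨t, htn⟩) 1 ∈ Mon e t := htopgf ▸ hA _ hg hne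
    have htopg : top w g ∈ Mon e t := Mon_colon hdisj (le_refl t) hmem
    obtain ⟨q, hqI, hqd⟩ := reduce w htop htopg
    have hsub : (g - q) * F ⟨t, htn⟩ ∈ Idl F t := by
      have hexp : (g - q) * F ⟨t, htn⟩ = g * F ⟨t, htn⟩ - q * F ⟨t, htn⟩ := by ring
      rw [hexp]
      exact Submodule.sub_mem _ hg (Ideal.mul_mem_right _ _ hqI)
    have hgq : g - q ∈ Idl F t := by
      refine ihN (g - q) ?_ hsub
      rcases hqd with h' | h'
      · exact Or.inl h'
      · right; omega
    have hgeq : g = (g - q) + q := by ring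
    rw [hgeq]
    exact Ideal.add_mem _ hgq hqI


/-- Bridge: ideal-colon property gives smul-regularity on the quotient module. -/
lemma isSMulRegular_quotient {R : Type*} [CommRing R] {J : Ideal R} {r : R}
    (h : ∀ z, r * z ∈ J → z ∈ J) :
    IsSMulRegular (R ⧸ (J • ⊤ : Submodule R R)) r := by
  have hJ : (J • ⊤ : Submodule R R) = J := by rw [smul_eq_mul, Ideal.mul_top]
  intro x y hxy
  obtain ⟨a, rfl⟩ := Submodule.Quotient.mk_surjective _ x
  obtain ⟨b, rfl⟩ := Submodule.Quotient.mk_surjective _ y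
  have hxy' : (Submodule.Quotient.mk (r • a) : R ⧸ (J • ⊤ : Submodule R R))
      = Submodule.Quotient.mk (r • b) := by
    rw [Submodule.Quotient.mk_smul, Submodule.Quotient.mk_smul]
    exact hxy
  rw [Submodule.Quotient.eq, hJ] at hxy'
  rw [Submodule.Quotient.eq, hJ]
  have hmem : r * (a - b) ∈ J := by
    have hra : r • a - r • b = r * (a - b) := by
      simp only [smul_eq_mul]; ring
    rwa [hra] at hxy'
  exact h _ hmem

variable (F) in
lemma ofList_take_eq_Idl (i : ℕ) :
    Ideal.ofList ((List.ofFn F).take i) = Idl F i := by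
  rw [Idl]
  refine congrArg Ideal.span ?_
  ext z
  constructor
  · intro hz
    obtain ⟨j, hj, rfl⟩ := List.mem_take_iff_getElem.mp hz
    have hjn : j < n := by
      have := hj
      simp only [List.length_ofFn] at this
      omega
    have hji : j < i := by
      have := hj
      simp only [List.length_ofFn] at this
      omega
    exact ⟨⟨⟨j, hjn⟩, hji⟩, (List.getElem_ofFn (f := F) (i := j) (by simpa [List.length_ofFn] using hjn)).symm⟩
  · rintro ⟨⟨s, hs⟩, rfl⟩
    have hsn : s.val < n := s.2
    refine List.mem_take_iff_getElem.mpr ⟨s.val, ?_, ?_⟩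
    · simp only [List.length_ofFn]
      omega
    · rw [List.getElem_ofFn]

variable (F) in
lemma ofList_ofFn_eq_Idl :
    Ideal.ofList (List.ofFn F) = Idl F n := by
  rw [Idl]
  refine congrArg Ideal.span ?_
  ext z
  constructor
  · intro hz
    obtain ⟨s, rfl⟩ := Set.mem_range.mp ((List.mem_ofFn' F z).mp hz)
    exact ⟨⟨s, s.2⟩, rfl⟩
  · rintro ⟨⟨s, hs⟩, rfl⟩
    exact (List.mem_ofFn' F _).mpr ⟨s, rfl⟩

/-- The abstract main theorem: a sequence of polynomials whose initial forms (for a weight `w`)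
are monomials with pairwise disjoint supports, and which vanish at the origin, is a regular
sequence. -/
theorem isRegular_of_initial_monomials
    (htop : ∀ s, top w (F s) = monomial (e s) 1)
    (hdisj : ∀ s t : Fin n, s ≠ t → Disjoint (e s).support (e t).support)
    (hconst : ∀ s, constantCoeff (F s) = 0) :
    RingTheory.Sequence.IsRegular (MvPolynomial σ k) (List.ofFn F) := by
  constructor
  · rw [RingTheory.Sequence.isWeaklyRegular_iff_Fin]
    intro i
    have hlen : (List.ofFn F).length = n := List.length_ofFn (f := F)
    have hin : i.val < n := by have := i.2; omega
    have hget : (List.ofFn F)[(i : ℕ)] = F ⟨i.val, hin⟩ := List.getElem_ofFn (f := F) (i := i.val) i.2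
    simp only [Fin.getElem_fin]
    rw [hget, ofList_take_eq_Idl F i.val]
    refine isSMulRegular_quotient ?_
    intro z hz
    refine claimB w htop hdisj hin z ?_
    rwa [mul_comm]
  · intro htop'
    have h1 : (1 : MvPolynomial σ k) ∈ Ideal.ofList (List.ofFn F) • (⊤ : Submodule (MvPolynomial σ k) (MvPolynomial σ k)) := by
      rw [← htop']
      exact Submodule.mem_top
    rw [smul_eq_mul, Ideal.mul_top, ofList_ofFn_eq_Idl] at h1
    have hker : Idl F n ≤ RingHom.ker (constantCoeff (R := k) (σ := σ)) := by
      rw [Idl, Ideal.span_le]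
      rintro z ⟨s, rfl⟩
      exact RingHom.mem_ker.mpr (hconst s.1)
    have := RingHom.mem_ker.mp (hker h1)
    rw [map_one] at this
    exact one_ne_zero this


end Main



section Concrete

/-- Weight function on the variables of the generic matrix product ring. -/
def wgt (a f g : ℕ) : ((Fin a × Fin f) ⊕ (Fin f × Fin g)) → ℕ
  | Sum.inl (i, l) => 4 * l.val * i.val + (f * f - l.val * l.val)
  | Sum.inr (l, j) => 4 * l.val * j.val + (f * f - l.val * l.val)

/-- The exponent of the initial monomial `x_{i,l₀} y_{l₀,j}`. -/
noncomputable def epr {a f g : ℕ} (i : Fin a) (j : Fin g) (l0 : Fin f) :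
    ((Fin a × Fin f) ⊕ (Fin f × Fin g)) →₀ ℕ :=
  Finsupp.single (Sum.inl (i, l0)) 1 + Finsupp.single (Sum.inr (l0, j)) 1

variable {a f g : ℕ}

lemma weight_epr (i : Fin a) (j : Fin g) (l0 : Fin f) :
    weight (wgt a f g) (epr i j l0) =
      wgt a f g (Sum.inl (i, l0)) + wgt a f g (Sum.inr (l0, j)) := by
  simp [epr, map_add, weight_apply]

lemma support_epr (i : Fin a) (j : Fin g) (l0 : Fin f) :
    (epr i j l0).support ⊆ {Sum.inl (i, l0), Sum.inr (l0, j)} := by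
  classical
  refine Finsupp.support_add.trans ?_
  apply Finset.union_subset
  · exact Finsupp.support_single_subset.trans (by simp)
  · exact Finsupp.support_single_subset.trans (by simp)

lemma epr_injective (i : Fin a) (j : Fin g) :
    Function.Injective (fun l : Fin f => epr i j l) := by
  intro l l' hll
  by_contra hne
  have h1 := DFunLike.congr_fun hll (Sum.inl (i, l))
  simp [epr, Finsupp.single_apply] at h1
  exact hne h1.symm

lemma wgt_lt (i : Fin a) (j : Fin g) (l : Fin f) (hs : i.val + j.val < f)
    (hne : l.val ≠ i.val + j.val) :
    wgt a f g (Sum.inl (i, l)) + wgt a f g (Sum.inr (l, j)) <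
      wgt a f g (Sum.inl (i, (⟨i.val + j.val, hs⟩ : Fin f))) +
        wgt a f g (Sum.inr ((⟨i.val + j.val, hs⟩ : Fin f), j)) := by
  simp only [wgt]
  have hl : l.val * l.val ≤ f * f := Nat.mul_le_mul l.2.le l.2.le
  have hs' : (i.val + j.val) * (i.val + j.val) ≤ f * f := Nat.mul_le_mul hs.le hs.le
  zify [hl, hs']
  have hne' : (l.val : ℤ) ≠ (i.val : ℤ) + j.val := by exact_mod_cast hne
  have h0 : ((i.val : ℤ) + j.val - l.val) ≠ 0 := sub_ne_zero.mpr (Ne.symm hne')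
  have h1 : 1 ≤ ((i.val : ℤ) + j.val - l.val) ^ 2 := by
    nlinarith [Int.one_le_abs h0, sq_abs ((i.val : ℤ) + j.val - l.val),
      abs_nonneg ((i.val : ℤ) + j.val - l.val)]
  nlinarith [h1]

end Concrete

end RegSeqAux

/-- If `1 ≤ a ≤ f − g`, then the `ag` entries of the generic matrix product `X·Y` form a
regular sequence in the polynomial ring `R = k[x_{il}, y_{lj}]`; in particular the
quotient by the ideal they generate is a complete intersection ring. -/
theorem genericProdEntries_isRegularSequence
    (k : Type*) [Field k] (a f g : ℕ) (ha : 0 < a) (hg : 0 < g) (hafg : a + g ≤ f) :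
    RingTheory.Sequence.IsRegular (MvPolynomial ((Fin a × Fin f) ⊕ (Fin f × Fin g)) k)
      (List.ofFn fun t : Fin (a * g) =>
        genericProdEntry k a f g (finProdFinEquiv.symm t).1 (finProdFinEquiv.symm t).2) := by
  classical
  have hlt : ∀ (i : Fin a) (j : Fin g), i.val + j.val < f := by
    intro i j
    have hi := i.2
    have hj := j.2
    omega
  have hf0 : 0 < f := by omega
  set w := RegSeqAux.wgt a f g with hw
  set F : Fin (a * g) → MvPolynomial ((Fin a × Fin f) ⊕ (Fin f × Fin g)) k :=
    fun t => genericProdEntry k a f g (finProdFinEquiv.symm t).1 (finProdFinEquiv.symm t).2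
      with hF
  set e : Fin (a * g) → (((Fin a × Fin f) ⊕ (Fin f × Fin g)) →₀ ℕ) :=
    fun t => RegSeqAux.epr (finProdFinEquiv.symm t).1 (finProdFinEquiv.symm t).2
      ⟨(finProdFinEquiv.symm t).1.val + (finProdFinEquiv.symm t).2.val,
        hlt (finProdFinEquiv.symm t).1 (finProdFinEquiv.symm t).2⟩ with he
  -- the sum-of-monomials presentation of the entries
  have hsum : ∀ (i : Fin a) (j : Fin g),
      genericProdEntry k a f g i j = ∑ l : Fin f, monomial (RegSeqAux.epr i j l) (1 : k) := by
    intro i j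
    refine Finset.sum_congr rfl fun l _ => ?_
    rw [show (X (Sum.inl (i, l)) : MvPolynomial _ k)
          = monomial (Finsupp.single (Sum.inl (i, l)) 1) 1 from rfl,
        show (X (Sum.inr (l, j)) : MvPolynomial _ k)
          = monomial (Finsupp.single (Sum.inr (l, j)) 1) 1 from rfl,
        monomial_mul, one_mul]
    rfl
  have : Nonempty (Fin f) := ⟨⟨0, hf0⟩⟩
  -- the top forms
  have htop : ∀ t, RegSeqAux.top w (F t) = monomial (e t) 1 := by
    intro t
    set i := (finProdFinEquiv.symm t).1 with hi
    set j := (finProdFinEquiv.symm t).2 with hj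
    set l0 : Fin f := ⟨i.val + j.val, hlt i j⟩ with hl0
    have hmax : ∀ l : Fin f, l ≠ l0 →
        weight w (RegSeqAux.epr i j l) < weight w (RegSeqAux.epr i j l0) := by
      intro l hne
      rw [RegSeqAux.weight_epr, RegSeqAux.weight_epr]
      exact RegSeqAux.wgt_lt i j l (hlt i j) (fun hv => hne (Fin.ext hv))
    have := RegSeqAux.top_sum_monomials (k := k) (w := w)
      (fun l : Fin f => RegSeqAux.epr i j l) (RegSeqAux.epr_injective i j) l0 hmax
    rw [hF]
    show RegSeqAux.top w (genericProdEntry k a f g i j) = monomial (e t) 1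
    rw [hsum i j]
    exact this.1
  -- pairwise disjoint supports of the initial monomials
  have hdisj : ∀ s t : Fin (a * g), s ≠ t → Disjoint (e s).support (e t).support := by
    intro s t hst
    refine Finset.disjoint_left.mpr ?_
    intro v hv1 hv2
    have h1 := RegSeqAux.support_epr _ _ _ hv1
    have h2 := RegSeqAux.support_epr _ _ _ hv2
    simp only [Finset.mem_insert, Finset.mem_singleton] at h1 h2
    set i1 := (finProdFinEquiv.symm s).1
    set j1 := (finProdFinEquiv.symm s).2
    set i2 := (finProdFinEquiv.symm t).1
    set j2 := (finProdFinEquiv.symm t).2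
    have hkey : finProdFinEquiv.symm s = finProdFinEquiv.symm t := by
      have hij : i1 = i2 ∧ j1 = j2 := by
        rcases h1 with h1 | h1 <;> rcases h2 with h2 | h2 <;> rw [h1] at h2
        · simp only [Sum.inl.injEq, Prod.mk.injEq] at h2
          have hval : i1.val + j1.val = i2.val + j2.val := congrArg Fin.val h2.2
          exact ⟨h2.1, Fin.ext (by
            have := congrArg Fin.val h2.1
            omega)⟩
        · exact absurd h2 (by simp)
        · exact absurd h2 (by simp)
        · simp only [Sum.inr.injEq, Prod.mk.injEq] at h2
          have hval : i1.val + j1.val = i2.val + j2.val := congrArg Fin.val h2.1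
          exact ⟨Fin.ext (by
            have := congrArg Fin.val h2.2
            omega), h2.2⟩
      exact Prod.ext hij.1 hij.2
    exact hst (finProdFinEquiv.symm.injective hkey)
  -- the entries vanish at the origin
  have hconst : ∀ t, constantCoeff (F t) = 0 := by
    intro t
    rw [hF]
    show constantCoeff (genericProdEntry k a f g _ _) = 0
    simp [genericProdEntry]
  exact RegSeqAux.isRegular_of_initial_monomials w htop hdisj hconst
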